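/- Let W be a restricted countable word over an alphabet X and let U and V be two reduced forms of W. Then for every finite subset F of X, the words U_F and V_F have the same free-group reduced form, i.e. [U_F] ≡ [V_F]. -/

import Mathlib

/-! ## Countable words -/

/-- A countable word over an alphabet `X`: a countable linearly ordered index type
together with a letter (element of `X` with a sign, `true` = positive) at each index. -/
structure CWord (X : Type) : Type 1 where
  ι : Type
  [lo : LinearOrder ι]
  [cnt : Countable ι]
  letter : ι → X × Bool

attribute [instance] CWord.lo CWord.cnt

namespace CWord

variable {X : Type}

/-- The formal inverse of a letter. -/
def invLetter (a : X × Bool) : X × Bool := (a.1, !a.2)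

/-- Two countable words are equal (`≡`) when an order isomorphism of the index sets
matches the letter functions. -/
def Equiv (U V : CWord X) : Prop :=
  ∃ e : U.ι ≃o V.ι, ∀ i, V.letter (e i) = U.letter i

/-- The word obtained from `U` by keeping only the indices in `s` (with the induced order). -/
def restrict (U : CWord X) (s : Set U.ι) : CWord X where
  ι := ↥s
  letter := fun i => U.letter i.1

/-- `V` is a subword of `U`: the restriction of `U` to an order-convex set of indices. -/
def IsSubword (V U : CWord X) : Prop :=
  ∃ s : Set U.ι, s.OrdConnected ∧ Equiv V (U.restrict s)

/-- Concatenation of two countable words (all of `U` before all of `V`). -/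
def concat (U V : CWord X) : CWord X where
  ι := Lex (U.ι ⊕ V.ι)
  cnt := inferInstanceAs (Countable (U.ι ⊕ V.ι))
  letter := fun i => Sum.elim U.letter V.letter (ofLex i)

/-- The inverse of a countable word: reverse the order and invert every letter. -/
def inv (U : CWord X) : CWord X where
  ι := U.ιᵒᵈ
  cnt := inferInstanceAs (Countable U.ι)
  letter := fun i => invLetter (U.letter (OrderDual.ofDual i))

/-- The empty word. -/
def empty (X : Type) : CWord X where
  ι := Fin 0
  letter := fun i => i.elim0

/-- `i` lies on an arch of `A`. -/
def OnArch {U : CWord X} (A : Set (U.ι × U.ι)) (i : U.ι) : Prop :=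
  ∃ a ∈ A, i = a.1 ∨ i = a.2

/-- An arch system on the word `U`: a set of arches (recorded as pairs `(i,j)` with `i < j`)
joining mutually inverse letters, pairwise disjoint, mutually non-crossing, and such that
everything under an arch is matched under that arch. -/
structure IsArchSystem (U : CWord X) (A : Set (U.ι × U.ι)) : Prop where
  lt : ∀ a ∈ A, a.1 < a.2
  inv_letters : ∀ a ∈ A, U.letter a.2 = invLetter (U.letter a.1)
  disjointEnds : ∀ a ∈ A, ∀ b ∈ A, a ≠ b →
    a.1 ≠ b.1 ∧ a.1 ≠ b.2 ∧ a.2 ≠ b.1 ∧ a.2 ≠ b.2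
  noncrossing : ∀ a ∈ A, ∀ b ∈ A, ¬ (a.1 < b.1 ∧ b.1 < a.2 ∧ a.2 < b.2)
  nested : ∀ a ∈ A, ∀ k : U.ι, a.1 < k → k < a.2 →
    ∃ b ∈ A, (b.1 = k ∧ a.1 < b.2 ∧ b.2 < a.2) ∨ (b.2 = k ∧ a.1 < b.1 ∧ b.1 < a.2)

/-- A complete arch system: every index lies on an arch. -/
def IsCompleteArchSystem (U : CWord X) (A : Set (U.ι × U.ι)) : Prop :=
  IsArchSystem U A ∧ ∀ i : U.ι, OnArch A i

/-- A word is reduced (irreducible) iff the only arch system on it is empty. -/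
def Reduced (U : CWord X) : Prop := ∀ A, IsArchSystem U A → A = ∅

/-- A word is restricted iff every letter of the alphabet occurs
(with either sign) only finitely many times. -/
def Restricted (U : CWord X) : Prop := ∀ x : X, {i : U.ι | (U.letter i).1 = x}.Finite

/-- `V` is a reduced form of `U`: `V` is obtained from `U` by deleting all indices lying on
arches of a maximal (under inclusion) arch system on `U`. -/
def IsReducedFormOf (V U : CWord X) : Prop :=
  ∃ A : Set (U.ι × U.ι), Maximal (IsArchSystem U) A ∧
    Equiv V (U.restrict {i | ¬ OnArch A i})

/-- `U_F`: the word obtained from `U` by deleting all letters outside `F ∪ F⁻¹`. -/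
def subAlph (U : CWord X) (F : Set X) : CWord X :=
  U.restrict {i | (U.letter i).1 ∈ F}

/-- The element of the free group on `X` spelled by a finite countable word
(junk value `1` for words with infinite index set). -/
noncomputable def toFreeGroup (U : CWord X) : FreeGroup X := by
  classical
  exact if h : Finite U.ι then
    letI := h
    letI : Fintype U.ι := Fintype.ofFinite U.ι
    (((List.finRange (Fintype.card U.ι)).map (fun n =>
      (FreeGroup.of (U.letter ((monoEquivOfFin U.ι rfl) n)).1) ^
        (if (U.letter ((monoEquivOfFin U.ι rfl) n)).2 then (1 : ℤ) else -1))).prod)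
  else 1

/-- Concatenation of a finite list of countable words. -/
def concatList : List (CWord X) → CWord X
  | [] => empty X
  | w :: l => concat w (concatList l)

/-- A tame word: a finite concatenation of restricted reduced countable words. -/
def IsTame (W : CWord X) : Prop :=
  ∃ l : List (CWord X), (∀ v ∈ l, Restricted v ∧ Reduced v) ∧ Equiv W (concatList l)

theorem equiv_refl (U : CWord X) : Equiv U U := ⟨OrderIso.refl _, fun _ => rfl⟩

theorem equiv_symm {U V : CWord X} (h : Equiv U V) : Equiv V U := by
  obtain ⟨e, he⟩ := h
  refine ⟨e.symm, fun i => ?_⟩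
  have h2 := he (e.symm i)
  rw [OrderIso.apply_symm_apply] at h2
  exact h2.symm

theorem equiv_trans {U V W : CWord X} (h1 : Equiv U V) (h2 : Equiv V W) : Equiv U W := by
  obtain ⟨e, he⟩ := h1
  obtain ⟨f, hf⟩ := h2
  exact ⟨e.trans f, fun i => (hf (e i)).trans (he i)⟩

end CWord

/-- Restricted reduced countable words ("reduced tame words") over `X`. -/
abbrev RRWord (X : Type) : Type 1 := {W : CWord X // CWord.Restricted W ∧ CWord.Reduced W}

instance rrwordSetoid (X : Type) : Setoid (RRWord X) where
  r a b := CWord.Equiv a.1 b.1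
  iseqv := ⟨fun _ => CWord.equiv_refl _, CWord.equiv_symm, CWord.equiv_trans⟩

/-- The underlying set of the group `W(X)` of restricted reduced countable words over `X`
(words identified up to `≡`). -/
abbrev WGroup (X : Type) : Type 1 := Quotient (rrwordSetoid X)

theorem restricted_empty (X : Type) : CWord.Restricted (CWord.empty X) := by
  intro x
  haveI : Finite (CWord.empty X).ι := inferInstanceAs (Finite (Fin 0))
  apply Set.toFinite

theorem reduced_empty (X : Type) : CWord.Reduced (CWord.empty X) := by
  intro A hA
  ext a
  simp only [Set.mem_empty_iff_false, iff_false]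
  intro _
  exact a.1.elim0

/-- The empty word as a restricted reduced word. -/
def emptyRR (X : Type) : RRWord X := ⟨CWord.empty X, restricted_empty X, reduced_empty X⟩

/-- A group structure on `WGroup X` is *the* `W(X)`-group structure when multiplication is
given by "the reduced form of the concatenation", the identity is the empty word, and
inversion is given by the inverse word. -/
def IsWGroupStructure (X : Type) (g : Group (WGroup X)) : Prop :=
  letI := g
  (∀ a b c : RRWord X, CWord.IsReducedFormOf c.1 (CWord.concat a.1 b.1) →
      (⟦a⟧ * ⟦b⟧ : WGroup X) = ⟦c⟧) ∧
  ((1 : WGroup X) = ⟦emptyRR X⟧) ∧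
  (∀ a b : RRWord X, CWord.Equiv b.1 (CWord.inv a.1) → ((⟦a⟧ : WGroup X)⁻¹ = ⟦b⟧))

section Aux

variable {X : Type}

private lemma freegroup_prod_mk (l : List (X × Bool)) :
    (l.map (fun p => FreeGroup.mk [p])).prod = FreeGroup.mk l := by
  induction l with
  | nil => simp [← FreeGroup.one_eq_mk]
  | cons a l ih =>
    rw [List.map_cons, List.prod_cons, ih, FreeGroup.mul_mk]
    rfl

private lemma mk_singleton (p : X × Bool) :
    (FreeGroup.of p.1) ^ (if p.2 then (1:ℤ) else -1) = FreeGroup.mk [p] := by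
  obtain ⟨x, b⟩ := p
  cases b
  · show FreeGroup.of x ^ (if false then (1:ℤ) else -1) = _
    rw [if_neg (by simp), zpow_neg, zpow_one,
      show FreeGroup.of x = FreeGroup.mk [(x, true)] from rfl, FreeGroup.inv_mk]
    rfl
  · show FreeGroup.of x ^ (if true then (1:ℤ) else -1) = _
    rw [if_pos rfl, zpow_one]
    rfl

/-- The list of letters of a finite countable word. -/
noncomputable def CWord.letterList (U : CWord X) (h : Finite U.ι) : List (X × Bool) :=
  letI := h
  letI : Fintype U.ι := Fintype.ofFinite U.ι
  (List.finRange (Fintype.card U.ι)).map (fun n => U.letter ((monoEquivOfFin U.ι rfl) n))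

lemma CWord.toFreeGroup_eq_mk (U : CWord X) (h : Finite U.ι) :
    U.toFreeGroup = FreeGroup.mk (U.letterList h) := by
  letI := h
  letI : Fintype U.ι := Fintype.ofFinite U.ι
  rw [CWord.toFreeGroup, dif_pos h, CWord.letterList, ← freegroup_prod_mk, List.map_map]
  exact congrArg List.prod (List.map_congr_left (fun n _ => mk_singleton _))

lemma CWord.letterList_spec (U : CWord X) (h : Finite U.ι) {k : ℕ} (e : Fin k ≃o U.ι) :
    U.letterList h = (List.finRange k).map (fun n => U.letter (e n)) := by
  letI := h
  letI inst : Fintype U.ι := Fintype.ofFinite U.ι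
  have hk : Fintype.card U.ι = k := by
    rw [← Fintype.card_fin k]
    exact Fintype.card_congr e.symm.toEquiv
  rw [CWord.letterList]
  subst hk
  have he : e = monoEquivOfFin U.ι rfl := Subsingleton.elim _ _
  rw [he]

lemma CWord.toFreeGroup_congr {U V : CWord X} (h : CWord.Equiv U V) (hV : Finite V.ι) :
    U.toFreeGroup = V.toFreeGroup := by
  obtain ⟨e, he⟩ := h
  have hU : Finite U.ι := Finite.of_equiv _ e.symm.toEquiv
  letI := hU
  letI : Fintype U.ι := Fintype.ofFinite U.ι
  rw [U.toFreeGroup_eq_mk hU, V.toFreeGroup_eq_mk hV]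
  congr 1
  rw [CWord.letterList_spec U hU (monoEquivOfFin U.ι rfl),
      CWord.letterList_spec V hV ((monoEquivOfFin U.ι rfl).trans e)]
  exact (List.map_congr_left (fun n _ => (he _))).symm

private def finsetCoeIso {α : Type} [LinearOrder α] (s : Finset α) :
    ↥s ≃o ↥(↑s : Set α) :=
  { toFun := fun x => ⟨x.1, Finset.mem_coe.mpr x.2⟩
    invFun := fun x => ⟨x.1, Finset.mem_coe.mp x.2⟩
    left_inv := fun _ => rfl
    right_inv := fun _ => rfl
    map_rel_iff' := Iff.rfl }

lemma CWord.letterList_restrict (W : CWord X) (s : Finset W.ι)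
    (h : Finite (W.restrict ↑s).ι) :
    (W.restrict ↑s).letterList h = (s.sort (· ≤ ·)).map W.letter := by
  rw [CWord.letterList_spec _ h ((s.orderIsoOfFin rfl).trans (finsetCoeIso s))]
  apply List.ext_getElem
  · simp
  · intro n h1 h2
    simp only [List.getElem_map, List.getElem_finRange, OrderIso.trans_apply]
    show W.letter ((s.orderIsoOfFin rfl _ : ↥s) : W.ι) = _
    rw [Finset.coe_orderIsoOfFin_apply, Finset.orderEmbOfFin_apply]
    rfl

end Aux
section Aux2

variable {X : Type}

private lemma equiv_subAlph {U V : CWord X} (h : CWord.Equiv U V) (F : Set X) :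
    CWord.Equiv (U.subAlph F) (V.subAlph F) := by
  obtain ⟨e, he⟩ := h
  refine ⟨{ toFun := fun x => ⟨e x.1, by
              show (V.letter (e x.1)).1 ∈ F
              rw [he x.1]; exact x.2⟩
            invFun := fun y => ⟨e.symm y.1, by
              show (U.letter (e.symm y.1)).1 ∈ F
              have := he (e.symm y.1)
              rw [e.apply_symm_apply] at this
              rw [← this]; exact y.2⟩
            left_inv := fun x => Subtype.ext (e.symm_apply_apply x.1)
            right_inv := fun y => Subtype.ext (e.apply_symm_apply y.1)
            map_rel_iff' := by
              intro x y
              exact e.le_iff_le }, fun i => he i.1⟩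

private lemma restrict_restrict (W : CWord X) (s : Set W.ι) (t : Set (W.restrict s).ι) :
    CWord.Equiv ((W.restrict s).restrict t)
      (W.restrict {i : W.ι | ∃ h : i ∈ s, (⟨i, h⟩ : ↥s) ∈ t}) := by
  refine ⟨{ toFun := fun x => ⟨x.1.1, x.1.2, x.2⟩
            invFun := fun y => ⟨⟨y.1, y.2.choose⟩, y.2.choose_spec⟩
            left_inv := fun x => Subtype.ext (Subtype.ext rfl)
            right_inv := fun y => Subtype.ext rfl
            map_rel_iff' := Iff.rfl }, fun i => rfl⟩

private lemma core {ι : Type} [LinearOrder ι] [DecidableEq ι] {β : Type}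
    (f : ι → β × Bool) (m : ι → ι) :
    ∀ (n : ℕ) (D s : Finset ι), D.card ≤ n → D ⊆ s →
      (∀ k ∈ D, m k ∈ D ∧ m k ≠ k ∧ m (m k) = k) →
      (∀ k ∈ D, f (m k) = CWord.invLetter (f k)) →
      (∀ k ∈ D, ∀ p ∈ s, min k (m k) < p → p < max k (m k) →
          p ∈ D ∧ min k (m k) < m p ∧ m p < max k (m k)) →
      FreeGroup.mk ((s.sort (· ≤ ·)).map f)
        = FreeGroup.mk (((s \ D).sort (· ≤ ·)).map f) := by
  intro n
  induction n with
  | zero =>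
    intro D s hc _ _ _ _
    rw [Finset.card_eq_zero.mp (Nat.le_zero.mp hc), Finset.sdiff_empty]
  | succ n ih =>
    intro D s hc hDs h1 h2 h3
    rcases Finset.eq_empty_or_nonempty D with hD | hD
    · rw [hD, Finset.sdiff_empty]
    obtain ⟨k₀, hk₀D, hmin⟩ := Finset.exists_min_image D
      (fun k => (s.filter (fun p => min k (m k) < p ∧ p < max k (m k))).card) hD
    obtain ⟨hmD, hmne, hmm⟩ := h1 k₀ hk₀D
    set i := min k₀ (m k₀) with hi
    set j := max k₀ (m k₀) with hj
    have hij : i < j := min_lt_max.mpr hmne.symm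
    have hiD : i ∈ D := by
      rcases min_choice k₀ (m k₀) with h | h
      · rw [hi, h]; exact hk₀D
      · rw [hi, h]; exact hmD
    have hjD : j ∈ D := by
      rcases max_choice k₀ (m k₀) with h | h
      · rw [hj, h]; exact hk₀D
      · rw [hj, h]; exact hmD
    have hmij : m i = j ∧ m j = i := by
      rcases le_total k₀ (m k₀) with h | h
      · rw [hi, hj, min_eq_left h, max_eq_right h]; exact ⟨rfl, hmm⟩
      · rw [hi, hj, min_eq_right h, max_eq_left h]; exact ⟨hmm, rfl⟩
    have hempty : ∀ p ∈ s, ¬(i < p ∧ p < j) := by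
      rintro p hps ⟨h1p, h2p⟩
      obtain ⟨hpD, hmp1, hmp2⟩ := h3 k₀ hk₀D p hps h1p h2p
      have hsub : s.filter (fun q => min p (m p) < q ∧ q < max p (m p)) ⊆
          s.filter (fun q => min k₀ (m k₀) < q ∧ q < max k₀ (m k₀)) := by
        intro q hq
        rw [Finset.mem_filter] at hq ⊢
        refine ⟨hq.1, lt_of_le_of_lt (le_min h1p.le hmp1.le) ?_,
          lt_of_lt_of_le ?_ (max_le h2p.le hmp2.le)⟩
        · exact lt_of_le_of_lt (min_le_min le_rfl le_rfl) hq.2.1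
        · exact hq.2.2
      have hpin : p ∈ s.filter (fun q => min k₀ (m k₀) < q ∧ q < max k₀ (m k₀)) := by
        rw [Finset.mem_filter]; exact ⟨hps, h1p, h2p⟩
      have hpnotin : p ∉ s.filter (fun q => min p (m p) < q ∧ q < max p (m p)) := by
        rw [Finset.mem_filter]
        rintro ⟨-, hlt1, hlt2⟩
        rcases le_total p (m p) with h | h
        · rw [min_eq_left h] at hlt1; exact lt_irrefl _ hlt1
        · rw [max_eq_left h] at hlt2; exact lt_irrefl _ hlt2
      have hlt := Finset.card_lt_card ((Finset.ssubset_iff_of_subset hsub).mpr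
        ⟨p, hpin, hpnotin⟩)
      exact absurd (hmin p hpD) (not_le.mpr hlt)
    have hfj : f j = CWord.invLetter (f i) := by
      have := h2 i hiD
      rw [hmij.1] at this
      exact this
    -- split of the sorted lists
    set A := s.filter (fun a => a < i) with hA
    set B := s.filter (fun a => j < a) with hB
    have himem : i ∈ s := hDs hiD
    have hjmem : j ∈ s := hDs hjD
    have hsortRHS : (A.sort (· ≤ ·) ++ i :: j :: B.sort (· ≤ ·)).Pairwise (· ≤ ·) := by
      refine List.pairwise_append.mpr ⟨Finset.pairwise_sort _ _, ?_, ?_⟩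
      · refine List.pairwise_cons.mpr ⟨?_, ?_⟩
        · intro b hb
          rcases List.mem_cons.mp hb with hb | hb
          · rw [hb]; exact hij.le
          · have := (Finset.mem_sort (α := ι) (· ≤ ·)).mp hb
            rw [hB, Finset.mem_filter] at this
            exact (hij.trans this.2).le
        · refine List.pairwise_cons.mpr ⟨fun b hb => ?_, Finset.pairwise_sort _ _⟩
          have := (Finset.mem_sort (α := ι) (· ≤ ·)).mp hb
          rw [hB, Finset.mem_filter] at this
          exact this.2.le
      · intro a ha b hb
        have haA := (Finset.mem_sort (α := ι) (· ≤ ·)).mp ha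
        rw [hA, Finset.mem_filter] at haA
        rcases List.mem_cons.mp hb with hb | hb
        · rw [hb]; exact haA.2.le
        rcases List.mem_cons.mp hb with hb' | hb'
        · rw [hb']; exact (haA.2.trans hij).le
        · have := (Finset.mem_sort (α := ι) (· ≤ ·)).mp hb'
          rw [hB, Finset.mem_filter] at this
          exact (haA.2.trans (hij.trans this.2)).le
    have hnodupRHS : (A.sort (· ≤ ·) ++ i :: j :: B.sort (· ≤ ·)).Nodup := by
      rw [List.nodup_append]
      refine ⟨Finset.sort_nodup _ _, ?_, ?_⟩
      · rw [List.nodup_cons, List.nodup_cons]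
        refine ⟨?_, ?_, Finset.sort_nodup _ _⟩
        · intro hmem
          rcases List.mem_cons.mp hmem with h | h
          · exact hij.ne h
          · have := (Finset.mem_sort (α := ι) (· ≤ ·)).mp h
            rw [hB, Finset.mem_filter] at this
            exact lt_irrefl _ (hij.trans this.2)
        · intro hmem
          have := (Finset.mem_sort (α := ι) (· ≤ ·)).mp hmem
          rw [hB, Finset.mem_filter] at this
          exact lt_irrefl _ this.2
      · intro a ha _ hb rfl
        have haA := (Finset.mem_sort (α := ι) (· ≤ ·)).mp ha
        rw [hA, Finset.mem_filter] at haA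
        rcases List.mem_cons.mp hb with h | h
        · exact lt_irrefl _ (h ▸ haA.2)
        rcases List.mem_cons.mp h with h' | h'
        · exact lt_irrefl _ (h' ▸ (haA.2.trans hij))
        · have := (Finset.mem_sort (α := ι) (· ≤ ·)).mp h'
          rw [hB, Finset.mem_filter] at this
          exact lt_irrefl _ (haA.2.trans (hij.trans this.2))
    have hmemRHS : ∀ a : ι, a ∈ (A.sort (· ≤ ·) ++ i :: j :: B.sort (· ≤ ·)) ↔ a ∈ s := by
      intro a
      simp only [List.mem_append, List.mem_cons, Finset.mem_sort, hA, hB, Finset.mem_filter]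
      constructor
      · rintro (⟨h, -⟩ | rfl | rfl | ⟨h, -⟩)
        · exact h
        · exact himem
        · exact hjmem
        · exact h
      · intro ha
        rcases lt_trichotomy a i with h | h | h
        · exact Or.inl ⟨ha, h⟩
        · exact Or.inr (Or.inl h)
        · rcases lt_trichotomy a j with h' | h' | h'
          · exact absurd ⟨h, h'⟩ (hempty a ha)
          · exact Or.inr (Or.inr (Or.inl h'))
          · exact Or.inr (Or.inr (Or.inr ⟨ha, h'⟩))
    have hsplit : s.sort (· ≤ ·) = A.sort (· ≤ ·) ++ i :: j :: B.sort (· ≤ ·) := by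
      apply List.Perm.eq_of_pairwise' (Finset.pairwise_sort _ _) hsortRHS ?_
      apply List.perm_of_nodup_nodup_toFinset_eq (Finset.sort_nodup _ _) hnodupRHS
      ext a
      simp only [List.mem_toFinset, Finset.mem_sort, hmemRHS]
    have hmemRHS' : ∀ a : ι, a ∈ (A.sort (· ≤ ·) ++ B.sort (· ≤ ·)) ↔ a ∈ s \ ({i, j} : Finset ι) := by
      intro a
      simp only [List.mem_append, Finset.mem_sort, hA, hB, Finset.mem_filter,
        Finset.mem_sdiff, Finset.mem_insert, Finset.mem_singleton]
      constructor
      · rintro (⟨h, hlt⟩ | ⟨h, hlt⟩)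
        · exact ⟨h, by rintro (rfl | rfl); exacts [lt_irrefl _ hlt, lt_irrefl _ (hlt.trans hij)]⟩
        · exact ⟨h, by rintro (rfl | rfl); exacts [lt_irrefl _ (hij.trans hlt), lt_irrefl _ hlt]⟩
      · rintro ⟨ha, hne⟩
        rcases lt_trichotomy a i with h | h | h
        · exact Or.inl ⟨ha, h⟩
        · exact absurd (Or.inl h) hne
        · rcases lt_trichotomy a j with h' | h' | h'
          · exact absurd ⟨h, h'⟩ (hempty a ha)
          · exact absurd (Or.inr h') hne
          · exact Or.inr ⟨ha, h'⟩
    have hsplit' : (s \ ({i, j} : Finset ι)).sort (· ≤ ·) = A.sort (· ≤ ·) ++ B.sort (· ≤ ·) := by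
      apply (fun h1 h2 => List.Perm.eq_of_pairwise' (Finset.pairwise_sort _ _) h2 h1) ?_ ?_
      · apply List.perm_of_nodup_nodup_toFinset_eq (Finset.sort_nodup _ _) ?_
        · ext a
          simp only [List.mem_toFinset, Finset.mem_sort, hmemRHS']
        · rw [List.nodup_append]
          refine ⟨Finset.sort_nodup _ _, Finset.sort_nodup _ _, ?_⟩
          intro a ha _ hb rfl
          have haA := (Finset.mem_sort (α := ι) (· ≤ ·)).mp ha
          rw [hA, Finset.mem_filter] at haA
          have := (Finset.mem_sort (α := ι) (· ≤ ·)).mp hb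
          rw [hB, Finset.mem_filter] at this
          exact lt_irrefl _ (haA.2.trans (hij.trans this.2))
      · refine List.pairwise_append.mpr ⟨Finset.pairwise_sort _ _, Finset.pairwise_sort _ _, ?_⟩
        intro a ha b hb
        have haA := (Finset.mem_sort (α := ι) (· ≤ ·)).mp ha
        rw [hA, Finset.mem_filter] at haA
        have hbB := (Finset.mem_sort (α := ι) (· ≤ ·)).mp hb
        rw [hB, Finset.mem_filter] at hbB
        exact (haA.2.trans (hij.trans hbB.2)).le
    have hstep : FreeGroup.mk ((s.sort (· ≤ ·)).map f)
        = FreeGroup.mk (((s \ ({i, j} : Finset ι)).sort (· ≤ ·)).map f) := by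
      rw [hsplit, hsplit', List.map_append, List.map_append, List.map_cons, List.map_cons]
      rw [← FreeGroup.quot_mk_eq_mk, ← FreeGroup.quot_mk_eq_mk]
      have hfi : f i = ((f i).1, (f i).2) := rfl
      have hfj' : f j = ((f i).1, !(f i).2) := by rw [hfj]; rfl
      rw [hfi, hfj']
      exact Quot.sound (FreeGroup.Red.Step.not)
    have hijD : ({i, j} : Finset ι) ⊆ D := by
      intro a ha
      rcases Finset.mem_insert.mp ha with rfl | ha
      · exact hiD
      · rw [Finset.mem_singleton.mp ha]; exact hjD
    have hssub : D \ ({i, j} : Finset ι) ⊂ D := by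
      refine Finset.sdiff_ssubset ?_ ?_  -- maybe wrong name
      · exact hijD
      · exact ⟨i, Finset.mem_insert_self _ _⟩
    have hcard' : (D \ ({i, j} : Finset ι)).card ≤ n :=
      Nat.lt_succ_iff.mp (lt_of_lt_of_le (Finset.card_lt_card hssub) hc)
    have hpartner_ne : ∀ k ∈ D, k ≠ i → k ≠ j → m k ≠ i ∧ m k ≠ j := by
      intro k hk hki hkj
      obtain ⟨hmk, -, hmmk⟩ := h1 k hk
      constructor
      · rintro h
        apply hkj
        rw [← hmmk, h, hmij.1]
      · rintro h
        apply hki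
        rw [← hmmk, h, hmij.2]
    have key := ih (D \ ({i, j} : Finset ι)) (s \ ({i, j} : Finset ι)) hcard'
      (Finset.sdiff_subset_sdiff hDs (Finset.Subset.refl _))
      (by
        intro k hk
        rw [Finset.mem_sdiff] at hk
        obtain ⟨hkD, hkij⟩ := hk
        have hki : k ≠ i := fun h => hkij (by rw [h]; exact Finset.mem_insert_self _ _)
        have hkj : k ≠ j := fun h => hkij (by
          rw [h]; exact Finset.mem_insert_of_mem (Finset.mem_singleton_self _))
        obtain ⟨hmk, hne, hmmk⟩ := h1 k hkD
        obtain ⟨hmi', hmj'⟩ := hpartner_ne k hkD hki hkj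
        refine ⟨Finset.mem_sdiff.mpr ⟨hmk, ?_⟩, hne, hmmk⟩
        simp only [Finset.mem_insert, Finset.mem_singleton]
        rintro (h | h)
        exacts [hmi' h, hmj' h])
      (fun k hk => h2 k (Finset.mem_sdiff.mp hk).1)
      (by
        intro k hk p hp hlt1 hlt2
        rw [Finset.mem_sdiff] at hk hp
        obtain ⟨hpD, hmp1, hmp2⟩ := h3 k hk.1 p hp.1 hlt1 hlt2
        exact ⟨Finset.mem_sdiff.mpr ⟨hpD, hp.2⟩, hmp1, hmp2⟩)
    have hfinal : (s \ ({i, j} : Finset ι)) \ (D \ ({i, j} : Finset ι)) = s \ D := by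
      ext a
      simp only [Finset.mem_sdiff, Finset.mem_insert, Finset.mem_singleton]
      constructor
      · rintro ⟨⟨has, hnij⟩, hnd⟩
        exact ⟨has, fun haD => hnd ⟨haD, hnij⟩⟩
      · rintro ⟨has, hnD⟩
        refine ⟨⟨has, ?_⟩, fun h => hnD h.1⟩
        rintro (rfl | rfl)
        exacts [hnD hiD, hnD hjD]
    rw [hstep, key, hfinal]

end Aux2
section Aux3

variable {X : Type}

open Classical in
private noncomputable def archPartner {W : CWord X} (A : Set (W.ι × W.ι)) (k : W.ι) : W.ι :=
  if h : ∃ a, a ∈ A ∧ (k = a.1 ∨ k = a.2) then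
    (if k = (Classical.choose h).1 then (Classical.choose h).2 else (Classical.choose h).1)
  else k

private lemma arch_eq {W : CWord X} {A : Set (W.ι × W.ι)} (hA : CWord.IsArchSystem W A)
    {a b : W.ι × W.ι} (ha : a ∈ A) (hb : b ∈ A)
    (h : a.1 = b.1 ∨ a.1 = b.2 ∨ a.2 = b.1 ∨ a.2 = b.2) : a = b := by
  by_contra hne
  obtain ⟨h1, h2, h3, h4⟩ := hA.disjointEnds a ha b hb hne
  tauto

private lemma archPartner_spec {W : CWord X} {A : Set (W.ι × W.ι)}
    (hA : CWord.IsArchSystem W A) {a : W.ι × W.ι} (ha : a ∈ A) :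
    archPartner A a.1 = a.2 ∧ archPartner A a.2 = a.1 := by
  constructor
  · have h : ∃ c, c ∈ A ∧ (a.1 = c.1 ∨ a.1 = c.2) := ⟨a, ha, Or.inl rfl⟩
    rw [archPartner]
    rw [dif_pos h]
    obtain ⟨hcA, hcc⟩ := Classical.choose_spec h
    have hac : a = Classical.choose h := arch_eq hA ha hcA (by tauto)
    rw [← hac, if_pos rfl]
  · have h : ∃ c, c ∈ A ∧ (a.2 = c.1 ∨ a.2 = c.2) := ⟨a, ha, Or.inr rfl⟩
    rw [archPartner]
    rw [dif_pos h]
    obtain ⟨hcA, hcc⟩ := Classical.choose_spec h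
    have hac : a = Classical.choose h := arch_eq hA ha hcA (by tauto)
    rw [← hac, if_neg (hA.lt a ha).ne']

end Aux3
/-! ## Statement -/

theorem statement0 {X : Type} (W : CWord X) (hW : CWord.Restricted W)
    (U V : CWord X) (hU : CWord.IsReducedFormOf U W) (hV : CWord.IsReducedFormOf V W)
    (F : Set X) (hF : F.Finite) :
    CWord.toFreeGroup (CWord.subAlph U F) = CWord.toFreeGroup (CWord.subAlph V F) := by
  classical
  obtain ⟨A, hAmax, hUeq⟩ := hU
  obtain ⟨B, hBmax, hVeq⟩ := hV
  have hTfin : {i : W.ι | (W.letter i).1 ∈ F}.Finite := by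
    refine Set.Finite.subset (Set.Finite.biUnion hF (fun x _ => hW x)) ?_
    intro i hi
    exact Set.mem_biUnion hi rfl
  set s : Finset W.ι := hTfin.toFinset with hs
  suffices H : ∀ (A : Set (W.ι × W.ι)) (U' : CWord X), CWord.IsArchSystem W A →
      CWord.Equiv U' (W.restrict {i | ¬ CWord.OnArch A i}) →
      CWord.toFreeGroup (CWord.subAlph U' F)
        = FreeGroup.mk ((s.sort (· ≤ ·)).map W.letter) by
    rw [H A U hAmax.1 hUeq, H B V hBmax.1 hVeq]
  clear hUeq hVeq hAmax hBmax A B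
  intro A U hA hUeq
  set S : Set W.ι := {i | ¬ CWord.OnArch A i} with hS
  set D : Finset W.ι := s.filter (fun i => CWord.OnArch A i) with hD
  set m : W.ι → W.ι := archPartner A with hm
  -- equivalence chain
  have e1 := equiv_subAlph hUeq F
  have e2 := restrict_restrict W S {x : ↥S | ((W.restrict S).letter x).1 ∈ F}
  have hset : {i : W.ι | ∃ h : i ∈ S, (⟨i, h⟩ : ↥S) ∈
      {x : ↥S | ((W.restrict S).letter x).1 ∈ F}} = ↑(s \ D) := by
    ext i
    simp only [Set.mem_setOf_eq, Finset.coe_sdiff, Set.mem_diff, Finset.mem_coe, hD,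
      Finset.mem_filter, hs, Set.Finite.mem_toFinset, Set.mem_setOf_eq]
    constructor
    · rintro ⟨h1, h2⟩
      have h1' : ¬ CWord.OnArch A i := h1
      exact ⟨h2, fun hcon => h1' hcon.2⟩
    · rintro ⟨h1, h2⟩
      exact ⟨fun hon => h2 ⟨h1, hon⟩, h1⟩
  replace e2 : CWord.Equiv ((W.restrict S).restrict {x : ↥S | ((W.restrict S).letter x).1 ∈ F})
      (W.restrict ↑(s \ D)) := by
    convert e2 using 2
    exact hset.symm
  have efin : Finite (W.restrict ↑(s \ D)).ι := (Finset.finite_toSet (s \ D)).to_subtype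
  have hfg := CWord.toFreeGroup_congr (CWord.equiv_trans e1 e2) efin
  rw [hfg, CWord.toFreeGroup_eq_mk _ efin, CWord.letterList_restrict W (s \ D) efin]
  -- apply the core cancellation lemma
  have hmemsD : ∀ k, k ∈ D ↔ (k ∈ s ∧ CWord.OnArch A k) := by
    intro k
    rw [hD, Finset.mem_filter]
  have hmems : ∀ k, k ∈ s ↔ (W.letter k).1 ∈ F := by
    intro k
    rw [hs, Set.Finite.mem_toFinset]
    exact Iff.rfl
  have hminmax : ∀ a : W.ι × W.ι, a ∈ A →
      (min a.1 (m a.1) = a.1 ∧ max a.1 (m a.1) = a.2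
        ∧ min a.2 (m a.2) = a.1 ∧ max a.2 (m a.2) = a.2) := by
    intro a haA
    obtain ⟨hp1, hp2⟩ := archPartner_spec hA haA
    have hlt := hA.lt a haA
    rw [hm, hp1, hp2]
    exact ⟨min_eq_left hlt.le, max_eq_right hlt.le, min_eq_right hlt.le, max_eq_left hlt.le⟩
  refine (core W.letter m D.card D s le_rfl (by rw [hD]; exact Finset.filter_subset _ _)
    ?_ ?_ ?_).symm
  · -- matching properties
    intro k hk
    obtain ⟨hks, a, haA, hka⟩ := (hmemsD k).mp hk
    obtain ⟨hp1, hp2⟩ := archPartner_spec hA haA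
    have hlt := hA.lt a haA
    have hinv := hA.inv_letters a haA
    rcases hka with rfl | rfl
    · rw [hm, hp1]
      refine ⟨(hmemsD a.2).mpr ⟨?_, a, haA, Or.inr rfl⟩, hlt.ne', by rw [hp2]⟩
      rw [hmems, hinv]
      exact (hmems a.1).mp hks
    · rw [hm, hp2]
      refine ⟨(hmemsD a.1).mpr ⟨?_, a, haA, Or.inl rfl⟩, hlt.ne, by rw [hp1]⟩
      rw [hmems]
      have := (hmems a.2).mp hks
      rw [hinv] at this
      exact this
  · -- inverse letters
    intro k hk
    obtain ⟨hks, a, haA, hka⟩ := (hmemsD k).mp hk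
    obtain ⟨hp1, hp2⟩ := archPartner_spec hA haA
    have hinv := hA.inv_letters a haA
    rcases hka with rfl | rfl
    · rw [hm, hp1]; exact hinv
    · rw [hm, hp2, hinv]
      simp [CWord.invLetter]
  · -- nestedness
    intro k hk p hps hl1 hl2
    obtain ⟨hks, a, haA, hka⟩ := (hmemsD k).mp hk
    obtain ⟨hmm1, hmm2, hmm3, hmm4⟩ := hminmax a haA
    have hl1' : a.1 < p := by
      rcases hka with rfl | rfl
      · rwa [hmm1] at hl1
      · rwa [hmm3] at hl1
    have hl2' : p < a.2 := by
      rcases hka with rfl | rfl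
      · rwa [hmm2] at hl2
      · rwa [hmm4] at hl2
    obtain ⟨b, hbA, hbc⟩ := hA.nested a haA p hl1' hl2'
    have hpD : p ∈ D := by
      refine (hmemsD p).mpr ⟨hps, b, hbA, ?_⟩
      rcases hbc with ⟨hb1, -⟩ | ⟨hb1, -⟩
      · exact Or.inl hb1.symm
      · exact Or.inr hb1.symm
    have hmp : a.1 < m p ∧ m p < a.2 := by
      obtain ⟨hq1, hq2⟩ := archPartner_spec hA hbA
      rcases hbc with ⟨hb1, hlt1, hlt2⟩ | ⟨hb1, hlt1, hlt2⟩
      · rw [← hb1, hm, hq1]; exact ⟨hlt1, hlt2⟩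
      · rw [← hb1, hm, hq2]; exact ⟨hlt1, hlt2⟩
    refine ⟨hpD, ?_, ?_⟩
    · rcases hka with rfl | rfl
      · rw [hmm1]; exact hmp.1
      · rw [hmm3]; exact hmp.1
    · rcases hka with rfl | rfl
      · rw [hmm2]; exact hmp.2
      · rw [hmm4]; exact hmp.2
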